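/- arXiv:1901.09772 — 2 statements merged into one kernel-verified Lean document; each statement's English description precedes it below -/
import Mathlib

section
/- Any separable verification operator Ω on ℂ^d ⊗ ℂ^d with ΩΦ = Φ and 0 ≤ Ω ≤ I satisfies tr(Ω) ≥ d, and hence its second largest eigenvalue satisfies β(Ω) ≥ (d−1)/(d²−1) = 1/(d+1); equivalently the spectral gap ν(Ω) = 1 − β(Ω) is at most d/(d+1). -/
open Matrix
open scoped ComplexOrder

/-- The conjugate-basis test projector P(B) = Σ_{ψ∈B} |ψ⟩⟨ψ| ⊗ |ψ*⟩⟨ψ*| on ℂ^d ⊗ ℂ^d. -/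
noncomputable def projCB (d : ℕ) (B : Fin d → Fin d → ℂ) :
    Matrix (Fin d × Fin d) (Fin d × Fin d) ℂ :=
  ∑ i, Matrix.kroneckerMap (· * ·) (Matrix.vecMulVec (B i) (star (B i)))
      (Matrix.vecMulVec (star (B i)) (B i))

/-- The maximally entangled state |Φ⟩ = d^{-1/2} Σ_j |j⟩⊗|j⟩ as a vector on Fin d × Fin d. -/
noncomputable def PhiVec (d : ℕ) : Fin d × Fin d → ℂ :=
  fun p => if p.1 = p.2 then ((Real.sqrt d : ℝ) : ℂ)⁻¹ else 0

/-- The rank-one projector |Φ⟩⟨Φ|. -/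
noncomputable def PhiMat (d : ℕ) : Matrix (Fin d × Fin d) (Fin d × Fin d) ℂ :=
  Matrix.vecMulVec (PhiVec d) (star (PhiVec d))

lemma phi_star {d : ℕ} : star (PhiVec d) = PhiVec d := by
  funext p
  simp only [Pi.star_apply, PhiVec, apply_ite (star : ℂ → ℂ), star_zero, star_inv₀,
    Complex.star_def, Complex.conj_ofReal]

lemma phi_norm {d : ℕ} (hd : 0 < d) : star (PhiVec d) ⬝ᵥ PhiVec d = 1 := by
  have hs : ((Real.sqrt d : ℝ) : ℂ)⁻¹ * ((Real.sqrt d : ℝ) : ℂ)⁻¹ = ((d : ℝ)⁻¹ : ℂ) := by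
    rw [← mul_inv]
    norm_cast
    rw [Real.mul_self_sqrt (by positivity)]
  rw [phi_star]
  simp only [dotProduct, PhiVec, Fintype.sum_prod_type]
  simp only [ite_mul, zero_mul, mul_ite, mul_zero, hs]
  simp only [Finset.sum_ite_eq, Finset.mem_univ, if_true]
  rw [Finset.sum_const, Finset.card_univ, Fintype.card_fin, nsmul_eq_mul]
  rw [← Complex.ofReal_natCast, ← Complex.ofReal_inv, ← Complex.ofReal_mul]
  rw [mul_inv_cancel₀ (by positivity), Complex.ofReal_one]

lemma kron_vmv {d : ℕ} (u v : Fin d → ℂ) :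
    Matrix.kroneckerMap (· * ·) (Matrix.vecMulVec u (star u)) (Matrix.vecMulVec v (star v))
      = Matrix.vecMulVec (fun p : Fin d × Fin d => u p.1 * v p.2)
          (star fun p : Fin d × Fin d => u p.1 * v p.2) := by
  ext p q
  simp [kroneckerMap, vecMulVec, Complex.star_def]
  ring

lemma trace_vmv {d : ℕ} (u : Fin d → ℂ) :
    (Matrix.vecMulVec u (star u)).trace = ((∑ a, Complex.normSq (u a) : ℝ) : ℂ) := by
  simp [Matrix.trace, Matrix.diag, vecMulVec, Complex.mul_conj, Complex.star_def]

lemma phi_dot_prod {d : ℕ} (u v : Fin d → ℂ) :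
    star (PhiVec d) ⬝ᵥ (fun p : Fin d × Fin d => u p.1 * v p.2)
      = ((Real.sqrt d : ℝ) : ℂ)⁻¹ * ∑ a, u a * v a := by
  rw [phi_star]
  simp only [dotProduct, PhiVec, Fintype.sum_prod_type, ite_mul, zero_mul, Finset.mul_sum]
  simp [Finset.sum_ite_eq, mul_assoc]

lemma vmv_mulVec {n : Type*} [Fintype n] (u v : n → ℂ) :
    Matrix.vecMulVec u (star u) *ᵥ v = (star u ⬝ᵥ v) • u := by
  funext i
  simp only [vecMulVec, mulVec, dotProduct, Pi.smul_apply, smul_eq_mul, of_apply, Pi.star_apply,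
    Finset.sum_mul, Finset.mul_sum]
  exact Finset.sum_congr rfl fun j _ => by ring

lemma dot_conj {n : Type*} [Fintype n] (u v : n → ℂ) :
    star u ⬝ᵥ v = starRingEnd ℂ (star v ⬝ᵥ u) := by
  simp only [dotProduct, map_sum, Pi.star_apply, _root_.map_mul, Complex.conj_conj,
    RingHom.coe_coe, Complex.star_def]
  exact Finset.sum_congr rfl fun j _ => by ring

lemma trace_vmv' {n : Type*} [Fintype n] (u : n → ℂ) :
    (Matrix.vecMulVec u (star u)).trace = ((∑ a, Complex.normSq (u a) : ℝ) : ℂ) := by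
  simp [Matrix.trace, Matrix.diag, vecMulVec, Complex.mul_conj, Complex.star_def]

lemma sumMulVec {n ι : Type*} [Fintype n] [Fintype ι] (M : ι → Matrix n n ℂ) (v : n → ℂ) :
    (∑ j : ι, M j) *ᵥ v = ∑ j : ι, M j *ᵥ v := by
  funext i
  simp only [Matrix.mulVec, dotProduct, Finset.sum_apply, Matrix.sum_apply, Finset.sum_mul]
  rw [Finset.sum_comm]

lemma dotSum {n ι : Type*} [Fintype n] [Fintype ι] (v : n → ℂ) (w : ι → n → ℂ) :
    v ⬝ᵥ (∑ j : ι, w j) = ∑ j : ι, v ⬝ᵥ w j := by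
  simp only [dotProduct, Finset.sum_apply, Finset.mul_sum]
  rw [Finset.sum_comm]

lemma trace_ge {d : ℕ} (hd : 0 < d)
    (Ω : Matrix (Fin d × Fin d) (Fin d × Fin d) ℂ)
    (hfix : Ω *ᵥ PhiVec d = PhiVec d)
    (m : ℕ) (c : Fin m → ℝ) (hc : ∀ j, 0 ≤ c j)
    (φ χ : Fin m → Fin d → ℂ)
    (hΩsep : Ω = ∑ j, (c j : ℂ) •
        Matrix.kroneckerMap (· * ·) (Matrix.vecMulVec (φ j) (star (φ j)))
          (Matrix.vecMulVec (χ j) (star (χ j)))) :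
    (d : ℝ) ≤ Ω.trace.re := by
  set w : Fin m → (Fin d × Fin d → ℂ) := fun j p => φ j p.1 * χ j p.2 with hw
  set s : Fin m → ℂ := fun j => ∑ a, φ j a * χ j a with hs
  set Fφ : Fin m → ℝ := fun j => ∑ a, Complex.normSq (φ j a) with hFφ
  set Fχ : Fin m → ℝ := fun j => ∑ a, Complex.normSq (χ j a) with hFχ
  have hΩ' : Ω = ∑ j, (c j : ℂ) • Matrix.vecMulVec (w j) (star (w j)) := by
    rw [hΩsep]; exact Finset.sum_congr rfl fun j _ => by rw [kron_vmv]
  -- trace formula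
  have htr : Ω.trace = ((∑ j, c j * (Fφ j * Fχ j) : ℝ) : ℂ) := by
    rw [hΩ', Matrix.trace_sum, Complex.ofReal_sum]
    refine Finset.sum_congr rfl fun j _ => ?_
    rw [Matrix.trace_smul, trace_vmv']
    have : (∑ p : Fin d × Fin d, Complex.normSq (w j p)) = Fφ j * Fχ j := by
      rw [hFφ, hFχ, Finset.sum_mul_sum]
      simp [hw, Fintype.sum_prod_type, Complex.normSq_mul]
    rw [this, smul_eq_mul]
    push_cast
    ring
  -- fixed point identity
  have hz : ∀ j, star (PhiVec d) ⬝ᵥ w j = ((Real.sqrt d : ℝ) : ℂ)⁻¹ * s j := fun j =>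
    phi_dot_prod (φ j) (χ j)
  have h1 : ((∑ j, c j * ((d : ℝ)⁻¹ * Complex.normSq (s j)) : ℝ) : ℂ) = 1 := by
    have hfix1 : star (PhiVec d) ⬝ᵥ (Ω *ᵥ PhiVec d) = 1 := by rw [hfix, phi_norm hd]
    rw [← hfix1, hΩ', sumMulVec]
    rw [dotSum, Complex.ofReal_sum]
    refine Finset.sum_congr rfl fun j _ => ?_
    rw [Matrix.smul_mulVec, dotProduct_smul, vmv_mulVec, dotProduct_smul]
    rw [dot_conj (w j) (PhiVec d), hz j]
    rw [smul_eq_mul, smul_eq_mul]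
    have : starRingEnd ℂ (((Real.sqrt d : ℝ) : ℂ)⁻¹ * s j) * (((Real.sqrt d : ℝ) : ℂ)⁻¹ * s j)
        = ((Complex.normSq (((Real.sqrt d : ℝ) : ℂ)⁻¹ * s j) : ℝ) : ℂ) := by
      rw [mul_comm, Complex.mul_conj]
    rw [this]
    have hns : Complex.normSq (((Real.sqrt d : ℝ) : ℂ)⁻¹ * s j)
        = (d : ℝ)⁻¹ * Complex.normSq (s j) := by
      rw [Complex.normSq_mul, Complex.normSq_inv, Complex.normSq_ofReal,
        Real.mul_self_sqrt (by positivity)]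
    rw [hns]
    push_cast
    ring
  have h1' : (∑ j, c j * ((d : ℝ)⁻¹ * Complex.normSq (s j)) : ℝ) = 1 := by
    exact_mod_cast h1
  -- Cauchy–Schwarz
  have hcs : ∀ j, Complex.normSq (s j) ≤ Fφ j * Fχ j := by
    intro j
    have h1 : ‖s j‖ ≤ ∑ a, ‖φ j a‖ * ‖χ j a‖ :=
      (norm_sum_le _ _).trans_eq (by simp [norm_mul])
    have h2 : (∑ a, ‖φ j a‖ * ‖χ j a‖) ^ 2 ≤ (∑ a, ‖φ j a‖ ^ 2) * (∑ a, ‖χ j a‖ ^ 2) :=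
      Finset.sum_mul_sq_le_sq_mul_sq _ _ _
    have h3 : Complex.normSq (s j) = ‖s j‖ ^ 2 := by
      rw [← Complex.sq_norm]
    have h4 : ‖s j‖ ^ 2 ≤ (∑ a, ‖φ j a‖ * ‖χ j a‖) ^ 2 := by
      refine pow_le_pow_left₀ (norm_nonneg _) h1 2
    rw [h3, hFφ, hFχ]
    refine h4.trans (h2.trans_eq ?_)
    congr 1 <;> exact Finset.sum_congr rfl fun a _ => by
      rw [← Complex.sq_norm]
  -- conclude
  have hsum : (d : ℝ) = ∑ j, c j * Complex.normSq (s j) := by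
    have hd' : (d : ℝ) ≠ 0 := by positivity
    have h2 : (d : ℝ)⁻¹ * ∑ j, c j * Complex.normSq (s j) = 1 := by
      rw [Finset.mul_sum, ← h1']
      exact Finset.sum_congr rfl fun j _ => by ring
    field_simp at h2
    linarith
  rw [htr, Complex.ofReal_re, hsum]
  exact Finset.sum_le_sum fun j _ => mul_le_mul_of_nonneg_left (hcs j) (hc j)

lemma vmv_mul {n : Type*} [Fintype n] (u v : n → ℂ) (M : Matrix n n ℂ) :
    Matrix.vecMulVec u v * M = Matrix.vecMulVec u (v ᵥ* M) := by
  ext p q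
  simp only [Matrix.mul_apply, vecMulVec, of_apply, Matrix.vecMul, dotProduct, Finset.mul_sum]
  exact Finset.sum_congr rfl fun r _ => by ring

lemma mul_vmv {n : Type*} [Fintype n] (M : Matrix n n ℂ) (u v : n → ℂ) :
    M * Matrix.vecMulVec u v = Matrix.vecMulVec (M *ᵥ u) v := by
  ext p q
  simp only [Matrix.mul_apply, vecMulVec, of_apply, Matrix.mulVec, dotProduct, Finset.sum_mul]
  exact Finset.sum_congr rfl fun r _ => by ring

lemma vecMul_vmv {n : Type*} [Fintype n] (x u v : n → ℂ) :
    x ᵥ* Matrix.vecMulVec u v = (x ⬝ᵥ u) • v := by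
  funext q
  simp only [Matrix.vecMul, vecMulVec, dotProduct, of_apply, Pi.smul_apply, smul_eq_mul,
    Finset.sum_mul]
  exact Finset.sum_congr rfl fun r _ => by ring

lemma diag_dot {n : Type*} [Fintype n] [DecidableEq n] (M : Matrix n n ℂ) (p : n) :
    star (Pi.single p (1:ℂ)) ⬝ᵥ (M *ᵥ Pi.single p (1:ℂ)) = M p p := by
  have h1 : star (Pi.single p (1:ℂ)) = (Pi.single p (1:ℂ) : n → ℂ) := by
    funext i
    simp only [Pi.star_apply, Pi.single_apply, apply_ite (star : ℂ → ℂ), star_one, star_zero]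
  rw [h1]
  simp [dotProduct, Matrix.mulVec, Pi.single_apply, ite_mul, mul_ite, Finset.sum_ite_eq,
    Finset.sum_ite_eq']

section Part2
variable {d : ℕ}

lemma phi_nsq_sum (hd : 0 < d) : (∑ p, Complex.normSq (PhiVec d p)) = 1 := by
  have h := phi_norm hd
  rw [dotProduct] at h
  have hc : ∀ p : Fin d × Fin d, star (PhiVec d) p * PhiVec d p
      = ((Complex.normSq (PhiVec d p) : ℝ) : ℂ) := fun p => by
    rw [Pi.star_apply, Complex.star_def, mul_comm, Complex.mul_conj]
  rw [Finset.sum_congr rfl (fun p _ => hc p), ← Complex.ofReal_sum] at h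
  exact_mod_cast h

lemma beta_ge (hd2 : 2 ≤ d)
    (Ω : Matrix (Fin d × Fin d) (Fin d × Fin d) ℂ)
    (hΩpos : Ω.PosSemidef)
    (hfix : Ω *ᵥ PhiVec d = PhiVec d)
    (htr : (d : ℝ) ≤ Ω.trace.re)
    (β : ℝ)
    (hβ : IsGreatest {r : ℝ | ∃ x : Fin d × Fin d → ℂ, star x ⬝ᵥ x = 1 ∧
        star (PhiVec d) ⬝ᵥ x = 0 ∧ (star x ⬝ᵥ (Ω *ᵥ x)).re = r} β) :
    1 / ((d : ℝ) + 1) ≤ β := by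
  have hd : 0 < d := by omega
  set P := PhiMat d with hP
  set Q := (1 : Matrix (Fin d × Fin d) (Fin d × Fin d) ℂ) - P with hQ
  have hrow : star (PhiVec d) ᵥ* Ω = star (PhiVec d) := by
    have := congrArg star hfix
    rwa [Matrix.star_mulVec, hΩpos.1] at this
  have hPΩ : P * Ω = P := by rw [hP, PhiMat, vmv_mul, hrow]
  have hΩP : Ω * P = P := by rw [hP, PhiMat, mul_vmv, hfix]
  have hvPraw : star (PhiVec d) ᵥ* Matrix.vecMulVec (PhiVec d) (star (PhiVec d))
      = star (PhiVec d) := by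
    rw [vecMul_vmv, phi_norm hd, one_smul]
  have hvP : star (PhiVec d) ᵥ* P = star (PhiVec d) := by rw [hP, PhiMat]; exact hvPraw
  have hPP : P * P = P := by rw [hP, PhiMat, vmv_mul, hvPraw]
  have hQΩQ : Q * Ω * Q = Ω - P := by
    rw [hQ, sub_mul, one_mul, hPΩ, mul_sub, mul_one, sub_mul, hΩP, hPP, sub_self, sub_zero]
  have hQQ : Q * Q = Q := by
    rw [hQ, sub_mul, one_mul, mul_sub, mul_one, hPP, sub_self, sub_zero]
  have hre : ∀ r, star (PhiVec d r) = PhiVec d r := fun r => congrFun (phi_star (d := d)) r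
  have hQH : Qᴴ = Q := by
    rw [hQ, Matrix.conjTranspose_sub, Matrix.conjTranspose_one]
    congr 1
    rw [hP, PhiMat]
    ext p q
    simp only [conjTranspose_apply, vecMulVec, of_apply, Pi.star_apply, star_mul', star_star,
      hre]
    ring
  have hApos : (Ω - P).PosSemidef := by
    have := hΩpos.mul_mul_conjTranspose_same Q
    rwa [hQH, hQΩQ] at this
  -- diagonal functions
  set f : Fin d × Fin d → ℝ := fun p => ((Ω - P) p p).re with hf
  set g : Fin d × Fin d → ℝ := fun p => 1 - Complex.normSq (PhiVec d p) with hg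
  have hPdiag : ∀ p, P p p = ((Complex.normSq (PhiVec d p) : ℝ) : ℂ) := by
    intro p
    rw [hP, PhiMat]
    simp [vecMulVec, Complex.mul_conj, Complex.star_def]
  have hQdiag : ∀ p, Q p p = ((g p : ℝ) : ℂ) := by
    intro p
    rw [hQ, Matrix.sub_apply, Matrix.one_apply_eq, hPdiag p, hg]
    push_cast
    ring
  have htrP : P.trace = 1 := by
    rw [hP, PhiMat, trace_vmv', phi_nsq_sum hd, Complex.ofReal_one]
  have hfpos : ∀ p, 0 ≤ f p := by
    intro p
    have h := hApos.dotProduct_mulVec_nonneg (Pi.single p 1)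
    rw [diag_dot] at h
    exact (Complex.le_def.mp h).1
  have hsumf : (d : ℝ) - 1 ≤ ∑ p, f p := by
    have : (∑ p, f p) = ((Ω - P).trace).re := by
      rw [Matrix.trace]
      simp [Matrix.diag, Complex.re_sum, hf]
    rw [this, Matrix.trace_sub, htrP]
    simp only [Complex.sub_re, Complex.one_re]
    linarith
  have hnsq : ∀ p : Fin d × Fin d, Complex.normSq (PhiVec d p) ≤ (d : ℝ)⁻¹ := by
    intro p
    rw [PhiVec]
    by_cases h : p.1 = p.2
    · simp only [h, if_true]
      rw [← Complex.ofReal_inv, Complex.normSq_ofReal]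
      rw [← Real.sqrt_inv]
      rw [Real.mul_self_sqrt (by positivity)]
    · simp only [h, if_false, Complex.normSq_zero]
      positivity
  have hgpos : ∀ p, 0 < g p := by
    intro p
    have h1 : (d : ℝ)⁻¹ < 1 := by
      rw [inv_lt_one_iff₀]
      right
      exact_mod_cast Nat.lt_of_lt_of_le Nat.one_lt_two hd2
    have := hnsq p
    rw [hg]
    simp only
    linarith
  have hsumg : (∑ p, g p) = (d : ℝ) ^ 2 - 1 := by
    rw [hg]
    rw [Finset.sum_sub_distrib]
    have h1 : (∑ _p : Fin d × Fin d, (1:ℝ)) = (d : ℝ)^2 := by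
      simp [Finset.card_univ]
      ring
    rw [h1, phi_nsq_sum hd]
  -- select p
  have hne : Nonempty (Fin d × Fin d) := ⟨(⟨0, hd⟩, ⟨0, hd⟩)⟩
  have hsel : ∃ p, (1 / ((d : ℝ) + 1)) * g p ≤ f p := by
    by_contra hcon
    push_neg at hcon
    have hlt : (∑ p, f p) < ∑ p, (1 / ((d : ℝ) + 1)) * g p :=
      Finset.sum_lt_sum_of_nonempty Finset.univ_nonempty fun p _ => hcon p
    rw [← Finset.mul_sum, hsumg] at hlt
    have hdd : (d : ℝ) + 1 ≠ 0 := by positivity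
    have : (1 / ((d : ℝ) + 1)) * ((d : ℝ)^2 - 1) = (d : ℝ) - 1 := by
      field_simp
      ring
    rw [this] at hlt
    linarith
  obtain ⟨p, hp⟩ := hsel
  -- construct the witness vector
  set y : Fin d × Fin d → ℂ := Q *ᵥ Pi.single p 1 with hy
  have hstary : star y = star (Pi.single p (1:ℂ)) ᵥ* Q := by
    rw [hy, Matrix.star_mulVec]
    rw [show Qᴴ = Q from hQH]
  have hyy : star y ⬝ᵥ y = Q p p := by
    rw [hstary, hy, ← Matrix.dotProduct_mulVec, Matrix.mulVec_mulVec, hQQ, diag_dot]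
  have horthy : star (PhiVec d) ⬝ᵥ y = 0 := by
    rw [hy, Matrix.dotProduct_mulVec]
    have : star (PhiVec d) ᵥ* Q = 0 := by
      rw [hQ, Matrix.vecMul_sub, Matrix.vecMul_one, hvP, sub_self]
    rw [this, zero_dotProduct]
  have hΩy : star y ⬝ᵥ (Ω *ᵥ y) = (Ω - P) p p := by
    rw [hstary, hy, Matrix.mulVec_mulVec, ← Matrix.dotProduct_mulVec, Matrix.mulVec_mulVec,
      ← Matrix.mul_assoc, hQΩQ, diag_dot]
  -- normalize
  set q : ℝ := g p with hq
  have hq0 : 0 < q := hgpos p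
  set cc : ℂ := (((Real.sqrt q)⁻¹ : ℝ) : ℂ) with hcc
  have hcc2 : cc * cc = ((q⁻¹ : ℝ) : ℂ) := by
    rw [hcc, ← Complex.ofReal_mul, ← mul_inv, Real.mul_self_sqrt hq0.le]
  set x : Fin d × Fin d → ℂ := cc • y with hx
  have hstarx : star x = cc • star y := by
    rw [hx]
    funext i
    simp [hcc, Complex.star_def, Complex.conj_ofReal]
  have hx1 : star x ⬝ᵥ x = 1 := by
    rw [hx, hstarx, smul_dotProduct, dotProduct_smul, hyy, hQdiag p,
      smul_eq_mul, smul_eq_mul, ← mul_assoc, hcc2]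
    rw [← Complex.ofReal_mul]
    rw [inv_mul_cancel₀ (by exact_mod_cast hq0.ne')]
    norm_num
  have hx2 : star (PhiVec d) ⬝ᵥ x = 0 := by
    rw [hx, dotProduct_smul, horthy, smul_zero]
  have hx3 : (star x ⬝ᵥ (Ω *ᵥ x)).re = q⁻¹ * f p := by
    rw [hx, Matrix.mulVec_smul, hstarx, smul_dotProduct, dotProduct_smul, hΩy,
      smul_eq_mul, smul_eq_mul, ← mul_assoc, hcc2]
    rw [Complex.re_ofReal_mul]
  have hmem : q⁻¹ * f p ∈ {r : ℝ | ∃ x : Fin d × Fin d → ℂ, star x ⬝ᵥ x = 1 ∧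
      star (PhiVec d) ⬝ᵥ x = 0 ∧ (star x ⬝ᵥ (Ω *ᵥ x)).re = r} := ⟨x, hx1, hx2, hx3⟩
  have hβge := hβ.2 hmem
  have hfin : 1 / ((d : ℝ) + 1) ≤ q⁻¹ * f p := by
    have h1 : (1 / ((d : ℝ) + 1)) * q ≤ f p := hp
    have h2 : q⁻¹ * ((1 / ((d : ℝ) + 1)) * q) ≤ q⁻¹ * f p :=
      mul_le_mul_of_nonneg_left h1 (by positivity)
    calc (1 : ℝ) / ((d : ℝ) + 1) = q⁻¹ * ((1 / ((d : ℝ) + 1)) * q) := by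
          field_simp
        _ ≤ q⁻¹ * f p := h2
  linarith

end Part2

/-- B is an orthonormal basis of ℂ^d. -/
def IsONB (d : ℕ) (B : Fin d → Fin d → ℂ) : Prop :=
  ∀ i j, star (B i) ⬝ᵥ B j = if i = j then 1 else 0

/-- any separable verification operator Ω for |Φ⟩ (0 ≤ Ω ≤ I, ΩΦ = Φ,
Ω a nonnegative combination of pure product operators) satisfies tr(Ω) ≥ d, and its
second largest eigenvalue β(Ω) satisfies β(Ω) ≥ 1/(d+1), i.e. ν(Ω) = 1−β(Ω) ≤ d/(d+1). -/
theorem stmt13 {d : ℕ} (hd : 0 < d)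
    (Ω : Matrix (Fin d × Fin d) (Fin d × Fin d) ℂ)
    (hΩpos : Ω.PosSemidef) (hΩle : (1 - Ω).PosSemidef)
    (hfix : Ω *ᵥ PhiVec d = PhiVec d)
    (m : ℕ) (c : Fin m → ℝ) (hc : ∀ j, 0 ≤ c j)
    (φ χ : Fin m → Fin d → ℂ)
    (hΩsep : Ω = ∑ j, (c j : ℂ) •
        Matrix.kroneckerMap (· * ·) (Matrix.vecMulVec (φ j) (star (φ j)))
          (Matrix.vecMulVec (χ j) (star (χ j))))
    (β : ℝ)
    (hβ : IsGreatest {r : ℝ | ∃ x : Fin d × Fin d → ℂ, star x ⬝ᵥ x = 1 ∧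
        star (PhiVec d) ⬝ᵥ x = 0 ∧ (star x ⬝ᵥ (Ω *ᵥ x)).re = r} β) :
    (d : ℝ) ≤ Ω.trace.re ∧ 1 / ((d : ℝ) + 1) ≤ β ∧ 1 - β ≤ (d : ℝ) / ((d : ℝ) + 1) := by
  have htr : (d : ℝ) ≤ Ω.trace.re := trace_ge hd Ω hfix m c hc φ χ hΩsep
  have hbeta : 1 / ((d : ℝ) + 1) ≤ β := by
    rcases Nat.lt_or_ge d 2 with hd2 | hd2
    · interval_cases d
      exfalso
      obtain ⟨x, hx1, hx2, -⟩ := hβ.1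
      have hx0 : x (0, 0) = 0 := by
        simpa [dotProduct, PhiVec, Fintype.sum_prod_type, Real.sqrt_one] using hx2
      rw [dotProduct] at hx1
      simp [Fintype.sum_prod_type, show x 0 = 0 from hx0, hx0] at hx1
    · exact beta_ge hd2 Ω hΩpos hfix htr β hβ
  refine ⟨htr, hbeta, ?_⟩
  have hdd : (0:ℝ) < (d : ℝ) + 1 := by positivity
  have heq : (d : ℝ) / ((d : ℝ) + 1) = 1 - 1 / ((d : ℝ) + 1) := by
    field_simp
    ring
  linarith
end

section
/- Let |Ψ⟩ = Σ_j s_j |jj⟩ be a bipartite pure state on ℂ^d⊗ℂ^d with Schmidt coefficients s_0 ≥ s_1 ≥ ⋯ ≥ s_{d−1} ≥ 0, Σ_j s_j² = 1. Any positive-partial-transpose operator Ω with 0 ≤ Ω ≤ I and Ω|Ψ⟩ = |Ψ⟩ of the homogeneous form Ω = |Ψ⟩⟨Ψ| + λ(I − |Ψ⟩⟨Ψ|) satisfies λ ≥ s₀s₁/(1 + s₀s₁). -/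
open Matrix
open scoped ComplexOrder

/-- for |Ψ⟩ = Σ_j s_j|jj⟩ with decreasing Schmidt coefficients, any PPT
homogeneous verification operator Ω = |Ψ⟩⟨Ψ| + λ(I − |Ψ⟩⟨Ψ|) with 0 ≤ Ω ≤ I and
Ω|Ψ⟩ = |Ψ⟩ satisfies λ ≥ s₀s₁/(1 + s₀s₁). -/
theorem stmt14 {d : ℕ} (hd : 2 ≤ d)
    (s : Fin d → ℝ) (hs0 : ∀ j, 0 ≤ s j)
    (hsdec : ∀ i j : Fin d, i ≤ j → s j ≤ s i)
    (hsnorm : ∑ j, (s j) ^ 2 = 1)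
    (Ψ : Fin d × Fin d → ℂ)
    (hΨ : Ψ = fun p => if p.1 = p.2 then ((s p.1 : ℝ) : ℂ) else 0)
    (lam : ℝ)
    (Ω : Matrix (Fin d × Fin d) (Fin d × Fin d) ℂ)
    (hΩ : Ω = Matrix.vecMulVec Ψ (star Ψ) +
        (lam : ℂ) • (1 - Matrix.vecMulVec Ψ (star Ψ)))
    (hΩpos : Ω.PosSemidef) (hΩle : (1 - Ω).PosSemidef)
    (hfix : Ω *ᵥ Ψ = Ψ)
    (hPPT : (Matrix.of fun p q : Fin d × Fin d => Ω (p.1, q.2) (q.1, p.2)).PosSemidef) :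
    s ⟨0, by omega⟩ * s ⟨1, by omega⟩ / (1 + s ⟨0, by omega⟩ * s ⟨1, by omega⟩) ≤ lam := by
  set i0 : Fin d := ⟨0, by omega⟩
  set i1 : Fin d := ⟨1, by omega⟩
  have h01 : i0 ≠ i1 := by simp [i0, i1, Fin.ext_iff]
  set M : Matrix (Fin d × Fin d) (Fin d × Fin d) ℂ :=
    Matrix.of fun p q : Fin d × Fin d => Ω (p.1, q.2) (q.1, p.2) with hM
  set a : Fin d × Fin d := (i0, i1)
  set b : Fin d × Fin d := (i1, i0)
  have key : star (Pi.single a 1 - Pi.single b 1 : Fin d × Fin d → ℂ) ⬝ᵥ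
      M *ᵥ (Pi.single a 1 - Pi.single b 1) = M a a - M a b - M b a + M b b := by
    have hst : star (Pi.single a 1 - Pi.single b 1 : Fin d × Fin d → ℂ)
        = Pi.single a 1 - Pi.single b 1 := by
      rw [star_sub, ← Pi.single_star, ← Pi.single_star, star_one]
    rw [hst, mulVec_sub, Matrix.mulVec_single, Matrix.mulVec_single,
      sub_dotProduct, dotProduct_sub, dotProduct_sub, single_dotProduct,
      single_dotProduct, single_dotProduct, single_dotProduct]
    simp only [MulOpposite.op_one, one_smul, Matrix.col_apply]
    ring
  have h := hPPT.dotProduct_mulVec_nonneg (Pi.single a 1 - Pi.single b 1)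
  rw [key] at h
  have hMaa : M a a = (lam : ℂ) := by
    simp [a, b, hM, hΩ, hΨ, Matrix.vecMulVec_apply, Matrix.one_apply, h01, Prod.ext_iff]
  have hMbb : M b b = (lam : ℂ) := by
    simp [a, b, hM, hΩ, hΨ, Matrix.vecMulVec_apply, Matrix.one_apply, h01, Ne.symm h01,
      Prod.ext_iff]
  have hMab : M a b = (s i0 : ℂ) * (s i1 : ℂ) * (1 - (lam : ℂ)) := by
    simp [a, b, hM, hΩ, hΨ, Matrix.vecMulVec_apply, Matrix.one_apply, h01, Prod.ext_iff]
    ring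
  have hMba : M b a = (s i1 : ℂ) * (s i0 : ℂ) * (1 - (lam : ℂ)) := by
    simp [a, b, hM, hΩ, hΨ, Matrix.vecMulVec_apply, Matrix.one_apply, Ne.symm h01, Prod.ext_iff]
    ring
  rw [hMaa, hMbb, hMab, hMba] at h
  have h' : (0 : ℂ) ≤ ((2 * lam - 2 * (s i0 * s i1) * (1 - lam) : ℝ) : ℂ) := by
    convert h using 1
    push_cast
    ring
  rw [Complex.zero_le_real] at h'
  have hpos : 0 < 1 + s i0 * s i1 := by nlinarith [mul_nonneg (hs0 i0) (hs0 i1)]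
  rw [div_le_iff₀ hpos]
  nlinarith [mul_nonneg (hs0 i0) (hs0 i1)]
end
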